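/- Let X, A be metrizable spaces with A compact, φ : X × [0,∞) → X continuous, and l : X × A → X continuous. Extend the state space to X_Δ = X ∪ {Δ} with Δ an added isolated point, and let B = [0,∞] × A with [0,∞] the one-point compactification of [0,∞). Define the transition map on the extended space X̂ = ([0,∞) × X) ∪ {(∞,Δ)} (with the metric ρ̂ making (sₙ,xₙ) → (∞,Δ) iff sₙ → ∞) by T((s,x),(θ,a)) = (s+θ, l(φ(x,θ),a)) if s + θ < ∞ and T((s,x),(θ,a)) = (∞,Δ) otherwise. Then for every bounded continuous function f on X̂, the map ((s,x),(θ,a)) ↦ f(T((s,x),(θ,a))) is continuous on X̂ × B. -/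

import Mathlib

open scoped NNReal ENNReal

/-- `g(s) = s/(s+1)`, mapping `[0,∞)` into `[0,1)`. -/
noncomputable def g (s : ℝ≥0) : ℝ := (s : ℝ) / ((s : ℝ) + 1)

/-- The metric `ρ̂` on `X̂ = ([0,∞) × X) ∪ {Δ∞}`, where `Δ∞` is encoded as `none`
and a pair `(s, x)` as `some (s, x)`. -/
noncomputable def hatDist {X : Type*} [MetricSpace X] :
    Option (ℝ≥0 × X) → Option (ℝ≥0 × X) → ℝ
  | some p, some q => dist p.2 q.2 * (1 - max (g p.1) (g q.1)) + |g p.1 - g q.1|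
  | some p, none => 1 - g p.1
  | none, some q => 1 - g q.1
  | none, none => 0

/-- The transition map of the auxiliary MDP on `X̂ = ([0,∞) × X) ∪ {(∞,Δ)}`:
`T((s,x),(θ,a)) = (s+θ, l(φ(x,θ),a))` if `s + θ < ∞`, and `(∞,Δ)` otherwise. -/
noncomputable def Tmap {X A : Type*} (φ : X → ℝ≥0 → X) (l : X → A → X) :
    Option (ℝ≥0 × X) → ℝ≥0∞ × A → Option (ℝ≥0 × X)
  | some p, q => if q.1 ≠ ∞ then some (p.1 + q.1.toNNReal, l (φ p.2 q.1.toNNReal) q.2)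
      else none
  | none, _ => none


section Aux
open Filter Topology

lemma g_nonneg (s : ℝ≥0) : 0 ≤ g s := div_nonneg s.coe_nonneg (by positivity)

lemma one_sub_g (s : ℝ≥0) : 1 - g s = 1 / ((s : ℝ) + 1) := by
  have h : (s : ℝ) + 1 ≠ 0 := by positivity
  rw [g, eq_div_iff h, sub_mul, div_mul_cancel₀ _ h]; ring

lemma g_lt_one (s : ℝ≥0) : g s < 1 := by
  have := one_sub_g s
  have h : (0:ℝ) < 1 / ((s : ℝ) + 1) := by positivity
  linarith

lemma g_mono : Monotone g := by
  intro a b hab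
  have ha : (0:ℝ) ≤ a := a.coe_nonneg
  have hab' : (a:ℝ) ≤ b := hab
  rw [g, g, div_le_div_iff₀ (by positivity) (by positivity)]
  nlinarith

lemma g_sub (s t : ℝ≥0) : g s - g t = ((s:ℝ) - t) / (((s:ℝ)+1) * ((t:ℝ)+1)) := by
  have h1 : (s:ℝ) + 1 ≠ 0 := by positivity
  have h2 : (t:ℝ) + 1 ≠ 0 := by positivity
  rw [g, g, div_sub_div _ _ h1 h2]
  ring

lemma g_continuous : Continuous fun s : ℝ≥0 => g s := by
  apply Continuous.div (by continuity) (by continuity)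
  intro s; positivity

variable {X : Type*} [MetricSpace X]

lemma some_continuous [m : MetricSpace (Option (ℝ≥0 × X))]
    (hm : ∀ p q : Option (ℝ≥0 × X), dist p q = hatDist p q) :
    Continuous (fun p : ℝ≥0 × X => (some p : Option (ℝ≥0 × X))) := by
  rw [continuous_iff_continuousAt]
  intro q
  rw [ContinuousAt, tendsto_iff_dist_tendsto_zero]
  apply squeeze_zero (fun p => dist_nonneg)
    (g := fun p : ℝ≥0 × X => dist p.2 q.2 + |g p.1 - g q.1|)
  · intro p
    rw [hm]
    show dist p.2 q.2 * (1 - max (g p.1) (g q.1)) + |g p.1 - g q.1| ≤ _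
    have h1 : 1 - max (g p.1) (g q.1) ≤ 1 := by
      have := g_nonneg p.1
      have := le_max_left (g p.1) (g q.1)
      linarith
    nlinarith [dist_nonneg (x := p.2) (y := q.2), abs_nonneg (g p.1 - g q.1)]
  · have h : Tendsto (fun p : ℝ≥0 × X => dist p.2 q.2 + |g p.1 - g q.1|) (𝓝 q)
        (𝓝 (dist q.2 q.2 + |g q.1 - g q.1|)) := by
      apply Tendsto.add
      · exact ((continuous_snd.dist continuous_const).tendsto q)
      · exact (((g_continuous.comp continuous_fst).sub continuous_const).abs.tendsto q)
    simpa using h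

lemma getD_tendsto [m : MetricSpace (Option (ℝ≥0 × X))]
    (hm : ∀ p q : Option (ℝ≥0 × X), dist p q = hatDist p q) (p₀ : ℝ≥0 × X) :
    Tendsto (fun o : Option (ℝ≥0 × X) => o.getD p₀) (𝓝 (some p₀)) (𝓝 p₀) := by
  obtain ⟨t, x₀⟩ := p₀
  rw [Metric.tendsto_nhds_nhds]
  intro ε hε
  set c : ℝ := (1 - g t) / 2 with hc
  have hc0 : 0 < c := by have := g_lt_one t; simp only [hc]; linarith
  have ht1 : (0:ℝ) < (t:ℝ) + 1 := by positivity
  refine ⟨min c (min (ε * c) (ε * c / ((t:ℝ) + 1))), by positivity, ?_⟩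
  rintro (_ | ⟨s, x⟩) hdist
  · simpa using hε
  · rw [hm] at hdist
    have hdist : dist x x₀ * (1 - max (g s) (g t)) + |g s - g t| <
        min c (min (ε * c) (ε * c / ((t:ℝ) + 1))) := hdist
    have hmax : 1 - max (g s) (g t) ≥ 0 := by
      rcases max_cases (g s) (g t) with ⟨h, _⟩ | ⟨h, _⟩ <;> rw [h]
      · linarith [g_lt_one s]
      · linarith [g_lt_one t]
    have habs : |g s - g t| < c := by
      calc |g s - g t| ≤ _ + |g s - g t| := by nlinarith [dist_nonneg (x := x) (y := x₀)]
        _ < _ := hdist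
        _ ≤ c := min_le_left _ _
    have hgs : (1:ℝ) - g s > c := by
      have := abs_lt.1 habs
      simp only [hc] at *
      linarith
    have hmaxc : 1 - max (g s) (g t) ≥ c := by
      rcases max_cases (g s) (g t) with ⟨h, _⟩ | ⟨h, _⟩ <;> rw [h]
      · linarith
      · simp only [hc]; linarith
    -- second component bound
    have hx : dist x x₀ < ε := by
      have h1 : dist x x₀ * c ≤ dist x x₀ * (1 - max (g s) (g t)) :=
        mul_le_mul_of_nonneg_left hmaxc dist_nonneg
      have h2 : dist x x₀ * (1 - max (g s) (g t)) < ε * c := by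
        calc dist x x₀ * (1 - max (g s) (g t)) ≤ _ := le_add_of_nonneg_right (abs_nonneg _)
          _ < _ := hdist
          _ ≤ ε * c := (min_le_right _ _).trans (min_le_left _ _)
      exact lt_of_mul_lt_mul_right (h1.trans_lt h2) hc0.le
    -- first component bound
    have hs1 : (s:ℝ) + 1 ≤ 1 / c := by
      rw [one_sub_g] at hgs
      rw [le_div_iff₀ hc0]
      have hs0 : (0:ℝ) < (s:ℝ) + 1 := by positivity
      have : ((s:ℝ) + 1) * c < ((s:ℝ)+1) * (1/((s:ℝ)+1)) :=
        mul_lt_mul_of_pos_left hgs hs0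
      have h11 : ((s:ℝ)+1) * (1/((s:ℝ)+1)) = 1 := by field_simp
      linarith
    have hst : |(s:ℝ) - t| < ε := by
      have he : |g s - g t| = |(s:ℝ) - t| / (((s:ℝ)+1) * ((t:ℝ)+1)) := by
        rw [g_sub, abs_div,
          abs_of_pos (show (0:ℝ) < ((s:ℝ)+1) * ((t:ℝ)+1) by positivity)]
      have hlt : |g s - g t| < ε * c / ((t:ℝ)+1) := by
        calc |g s - g t| ≤ _ := le_add_of_nonneg_left (by positivity)
          _ < _ := hdist
          _ ≤ _ := (min_le_right _ _).trans (min_le_right _ _)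
      rw [he, div_lt_div_iff₀ (by positivity) (by positivity)] at hlt
      have hcs : ((s:ℝ)+1) * c ≤ 1 := (le_div_iff₀ hc0).1 hs1
      have hs0 : (0:ℝ) < (s:ℝ) + 1 := by positivity
      have h3 : ε * c * (((s:ℝ)+1) * ((t:ℝ)+1)) ≤ ε * ((t:ℝ)+1) := by
        nlinarith [mul_le_mul_of_nonneg_left hcs (mul_nonneg hε.le ht1.le)]
      exact lt_of_mul_lt_mul_right (hlt.trans_le h3) ht1.le
    rw [Prod.dist_eq, sup_lt_iff]
    constructor
    · rwa [NNReal.dist_eq]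
    · exact hx

variable {X A : Type*} [MetricSpace X] [TopologicalSpace A]

lemma Tmap_dist_none [m : MetricSpace (Option (ℝ≥0 × X))]
    (hm : ∀ p q : Option (ℝ≥0 × X), dist p q = hatDist p q)
    (φ : X → ℝ≥0 → X) (l : X → A → X) (p : Option (ℝ≥0 × X)) (q : ℝ≥0∞ × A) :
    dist (Tmap φ l p q) (none : Option (ℝ≥0 × X)) ≤ dist p (none : Option (ℝ≥0 × X)) := by
  match p with
  | none => simp [Tmap]
  | some r =>
    by_cases hq : q.1 ≠ ∞
    · have heq : Tmap φ l (some r) q =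
          some (r.1 + q.1.toNNReal, l (φ r.2 q.1.toNNReal) q.2) := by simp [Tmap, hq]
      rw [heq, hm, hm]
      show 1 - g (r.1 + q.1.toNNReal) ≤ 1 - g r.1
      have := g_mono (le_self_add : r.1 ≤ r.1 + q.1.toNNReal)
      linarith
    · have heq : Tmap φ l (some r) q = none := by simp [Tmap]; tauto
      rw [heq, hm, hm]
      show (0:ℝ) ≤ 1 - g r.1
      linarith [g_lt_one r.1]

theorem Tcont [m : MetricSpace (Option (ℝ≥0 × X))]
    (hm : ∀ p q : Option (ℝ≥0 × X), dist p q = hatDist p q)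
    (φ : X → ℝ≥0 → X) (hφ : Continuous fun p : X × ℝ≥0 => φ p.1 p.2)
    (l : X → A → X) (hl : Continuous fun p : X × A => l p.1 p.2) :
    Continuous fun q : Option (ℝ≥0 × X) × (ℝ≥0∞ × A) => Tmap φ l q.1 q.2 := by
  rw [continuous_iff_continuousAt]
  rintro ⟨p₀, θ₀, a₀⟩
  match p₀ with
  | none =>
    -- constant-ish: output always within dist of x.1 to none
    show Tendsto _ _ (𝓝 (Tmap φ l none (θ₀, a₀)))
    have hval : Tmap φ l none (θ₀, a₀) = none := rfl
    rw [hval, tendsto_iff_dist_tendsto_zero]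
    have h : Tendsto (fun x : Option (ℝ≥0 × X) × (ℝ≥0∞ × A) => dist x.1 (none : Option (ℝ≥0 × X)))
        (𝓝 ((none : Option (ℝ≥0 × X)), (θ₀, a₀))) (𝓝 (dist (none : Option (ℝ≥0 × X)) (none : Option (ℝ≥0 × X)))) :=
      (continuous_fst.dist continuous_const).tendsto _
    exact squeeze_zero (fun x => dist_nonneg)
      (fun x => Tmap_dist_none hm φ l x.1 x.2) (by simpa only [dist_self] using h)
  | some p =>
    by_cases hθ : θ₀ = ∞
    · subst hθ
      show Tendsto _ _ (𝓝 (Tmap φ l (some p) (∞, a₀)))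
      have hval : Tmap φ l (some p) (∞, a₀) = none := by simp [Tmap]
      rw [hval, Metric.tendsto_nhds]
      intro ε hε
      set C : ℝ≥0 := Real.toNNReal (1 / ε) with hC
      have hCε : 1 - g C < ε := by
        have hCe : (C:ℝ) = 1/ε := Real.coe_toNNReal _ (by positivity)
        rw [one_sub_g, hCe]
        rw [div_lt_iff₀ (by positivity)]
        have h1 : ε * (1/ε + 1) = 1 + ε := by field_simp
        linarith
      have hev : ∀ᶠ x : Option (ℝ≥0 × X) × (ℝ≥0∞ × A) in 𝓝 (some p, (∞, a₀)),
          (C : ℝ≥0∞) < x.2.1 := by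
        have hc : ContinuousAt (fun x : Option (ℝ≥0 × X) × (ℝ≥0∞ × A) => x.2.1)
            (some p, (∞, a₀)) := (continuous_fst.comp continuous_snd).continuousAt
        exact hc (isOpen_Ioi.mem_nhds (by exact ENNReal.coe_lt_top))
      filter_upwards [hev] with x hx
      match hx1 : x.1 with
      | none => simpa [Tmap, hm] using hε
      | some r =>
        by_cases hq : x.2.1 = ∞
        · simp [Tmap, hq, hm]
          exact hε
        · have : Tmap φ l (some r) x.2 = some (r.1 + x.2.1.toNNReal, l (φ r.2 x.2.1.toNNReal) x.2.2) := by
            simp [Tmap, hq]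
          rw [this, hm]
          show 1 - g (r.1 + x.2.1.toNNReal) < ε
          have hCle : C ≤ x.2.1.toNNReal := by
            rw [← ENNReal.coe_le_coe, ENNReal.coe_toNNReal hq]
            exact hx.le
          have hmono := g_mono (hCle.trans (le_add_self : x.2.1.toNNReal ≤ r.1 + x.2.1.toNNReal))
          linarith
    · -- θ₀ ≠ ∞ : locally Tmap = some ∘ F ∘ (getD, id)
      have hval : Tmap φ l (some p) (θ₀, a₀) =
          some (p.1 + θ₀.toNNReal, l (φ p.2 θ₀.toNNReal) a₀) := by simp [Tmap, hθ]
      show Tendsto _ _ (𝓝 (Tmap φ l (some p) (θ₀, a₀)))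
      have h1 : Tendsto (fun x : Option (ℝ≥0 × X) × (ℝ≥0∞ × A) => (x.1.getD p, x.2))
          (𝓝 (some p, (θ₀, a₀))) (𝓝 (p, (θ₀, a₀))) :=
        ((getD_tendsto hm p).comp (continuous_fst.tendsto _)).prodMk_nhds (continuous_snd.tendsto _)
      have htn : Tendsto ENNReal.toNNReal (𝓝 θ₀) (𝓝 θ₀.toNNReal) :=
        ENNReal.tendsto_toNNReal hθ
      have h2 : Tendsto (fun y : (ℝ≥0 × X) × (ℝ≥0∞ × A) =>
            (some (y.1.1 + y.2.1.toNNReal, l (φ y.1.2 y.2.1.toNNReal) y.2.2) : Option (ℝ≥0 × X)))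
          (𝓝 (p, (θ₀, a₀))) (𝓝 (some (p.1 + θ₀.toNNReal, l (φ p.2 θ₀.toNNReal) a₀))) := by
        have htn' : Tendsto (fun y : (ℝ≥0 × X) × (ℝ≥0∞ × A) => y.2.1.toNNReal)
            (𝓝 (p, (θ₀, a₀))) (𝓝 θ₀.toNNReal) :=
          htn.comp ((continuous_fst.comp continuous_snd).tendsto _)
        have hadd : Tendsto (fun y : (ℝ≥0 × X) × (ℝ≥0∞ × A) => y.1.1 + y.2.1.toNNReal)
            (𝓝 (p, (θ₀, a₀))) (𝓝 (p.1 + θ₀.toNNReal)) :=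
          ((continuous_fst.fst.tendsto _).add htn')
        have hφ' : Tendsto (fun y : (ℝ≥0 × X) × (ℝ≥0∞ × A) => φ y.1.2 y.2.1.toNNReal)
            (𝓝 (p, (θ₀, a₀))) (𝓝 (φ p.2 θ₀.toNNReal)) :=
          (hφ.tendsto (p.2, θ₀.toNNReal)).comp
            ((continuous_fst.snd.tendsto _).prodMk_nhds htn')
        have hl' : Tendsto (fun y : (ℝ≥0 × X) × (ℝ≥0∞ × A) => l (φ y.1.2 y.2.1.toNNReal) y.2.2)
            (𝓝 (p, (θ₀, a₀))) (𝓝 (l (φ p.2 θ₀.toNNReal) a₀)) :=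
          (hl.tendsto (φ p.2 θ₀.toNNReal, a₀)).comp
            (hφ'.prodMk_nhds (continuous_snd.snd.tendsto _))
        exact ((some_continuous hm).tendsto _).comp (hadd.prodMk_nhds hl')
      have hev : ∀ᶠ x : Option (ℝ≥0 × X) × (ℝ≥0∞ × A) in 𝓝 (some p, (θ₀, a₀)),
          Tmap φ l x.1 x.2 =
            some ((x.1.getD p).1 + x.2.1.toNNReal, l (φ (x.1.getD p).2 x.2.1.toNNReal) x.2.2) := by
        have hev1 : ∀ᶠ x : Option (ℝ≥0 × X) × (ℝ≥0∞ × A) in 𝓝 (some p, (θ₀, a₀)),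
            x.1 ≠ none := by
          have : ContinuousAt (fun x : Option (ℝ≥0 × X) × (ℝ≥0∞ × A) => x.1)
              (some p, (θ₀, a₀)) := continuous_fst.continuousAt
          exact this (isClosed_singleton.isOpen_compl.mem_nhds (by simp))
        have hev2 : ∀ᶠ x : Option (ℝ≥0 × X) × (ℝ≥0∞ × A) in 𝓝 (some p, (θ₀, a₀)),
            x.2.1 ≠ ∞ := by
          have : ContinuousAt (fun x : Option (ℝ≥0 × X) × (ℝ≥0∞ × A) => x.2.1)
              (some p, (θ₀, a₀)) := (continuous_fst.comp continuous_snd).continuousAt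
          exact this (isClosed_singleton.isOpen_compl.mem_nhds (by simpa using hθ))
        filter_upwards [hev1, hev2] with x hx1 hx2
        match hx : x.1 with
        | none => exact absurd hx (by rwa [hx] at hx1 ⊢) -- contradiction
        | some r => simp [Tmap, hx2]
      rw [hval]
      exact (h2.comp h1).congr' (hev.mono fun x h => h.symm)

end Aux

/-- For a continuous flow `φ` and continuous jump map `l`, and any bounded continuous
function `f` on `X̂` (with the metric `ρ̂`), the map
`((s,x),(θ,a)) ↦ f(T((s,x),(θ,a)))` is continuous on `X̂ × B`, `B = [0,∞] × A`. -/
theorem stmt_13 {X A : Type*} [MetricSpace X]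
    [TopologicalSpace A] [CompactSpace A] [TopologicalSpace.MetrizableSpace A]
    (hρ : ∀ x y : X, dist x y ≤ 2)
    [m : MetricSpace (Option (ℝ≥0 × X))]
    (hm : ∀ p q : Option (ℝ≥0 × X), dist p q = hatDist p q)
    (φ : X → ℝ≥0 → X) (hφ : Continuous fun p : X × ℝ≥0 => φ p.1 p.2)
    (l : X → A → X) (hl : Continuous fun p : X × A => l p.1 p.2)
    (f : Option (ℝ≥0 × X) → ℝ) (hf : Continuous f) (hfb : ∃ M, ∀ p, |f p| ≤ M) :
    Continuous fun q : Option (ℝ≥0 × X) × (ℝ≥0∞ × A) => f (Tmap φ l q.1 q.2) := by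
  exact hf.comp (Tcont hm φ hφ l hl)
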